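/- Let K ⊆ L be finite fields, U a finite-dimensional K-vector space, and λ = (λ_1, ..., λ_m) with λ_i ∈ Hom_K(U, L). For each i let V_i = λ_i^*(L) ⊆ U be the image of the dual map. Then for every u ∈ U: wt(λ(u)) = m − ∑_{v ∈ U} (∑_{i=1}^m (1/|V_i|)·1_{V_i}(v)) · χ_v(u), where χ_v is the character of U associated to v via a fixed nondegenerate pairing and nontrivial character of K. -/

import Mathlib

theorem stmt_12 (K : Type*) [Field K] [Fintype K] [DecidableEq K]
    (k n m : ℕ)
    (M : Fin m → Matrix (Fin k) (Fin n) K)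
    (V : Fin m → Submodule K (Fin k → K))
    (hV : ∀ i, V i = LinearMap.range (Matrix.mulVecLin (M i)))
    (π : AddChar K ℂ) (hπ : π ≠ 1) :
    ∀ u : Fin k → K,
      ((Finset.univ.filter fun i : Fin m => (M i).transpose.mulVec u ≠ 0).card : ℂ) =
      m - ∑ v : Fin k → K,
        (∑ i : Fin m, (Nat.card (V i) : ℂ)⁻¹ *
          Set.indicator (V i : Set (Fin k → K)) 1 v) * π (dotProduct v u) := by
  classical
  intro u
  -- key inner-product identity
  have hdot : ∀ (i : Fin m) (b : Fin n → K),
      dotProduct ((M i).mulVec b) u = dotProduct b ((M i).transpose.mulVec u) := by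
    intro i b
    rw [dotProduct_comm, Matrix.dotProduct_mulVec, ← Matrix.mulVec_transpose,
      dotProduct_comm]
  -- per-i character sum
  have key : ∀ i : Fin m,
      (∑ v : Fin k → K, (if v ∈ V i then (1:ℂ) else 0) * π (dotProduct v u)) =
      if (M i).transpose.mulVec u = 0 then (Nat.card (V i) : ℂ) else 0 := by
    intro i
    have hsum : (∑ v : Fin k → K, (if v ∈ V i then (1:ℂ) else 0) * π (dotProduct v u))
        = ∑ x : (V i), π (dotProduct (x : Fin k → K) u) := by
      simp only [ite_mul, one_mul, zero_mul]
      rw [← Finset.sum_filter]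
      exact Finset.sum_subtype _ (by simp) _
    rw [hsum]
    by_cases h : (M i).transpose.mulVec u = 0
    · rw [if_pos h]
      have h1 : ∀ x : (V i), π (dotProduct (x : Fin k → K) u) = 1 := by
        rintro ⟨x, hx⟩
        rw [hV i] at hx
        obtain ⟨b, rfl⟩ := hx
        simp only [Matrix.mulVecLin_apply]
        rw [hdot i b, h, dotProduct_zero, AddChar.map_zero_eq_one]
      rw [Finset.sum_congr rfl (fun x _ => h1 x)]
      simp [Nat.card_eq_fintype_card]
    · rw [if_neg h]
      -- build additive character on the subgroup
      let f : (V i) →+ K :=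
        { toFun := fun x => dotProduct (x : Fin k → K) u
          map_zero' := by simp
          map_add' := by
            rintro ⟨x, _⟩ ⟨y, _⟩
            simp [add_dotProduct] }
      have hne : π.compAddMonoidHom f ≠ 1 := by
        obtain ⟨j, hj⟩ : ∃ j, (M i).transpose.mulVec u j ≠ 0 := by
          by_contra hc
          push_neg at hc
          exact h (funext hc)
        obtain ⟨a, ha⟩ := AddChar.ne_one_iff.1 hπ
        set c := (M i).transpose.mulVec u j with hc
        set b : Fin n → K := fun j' => if j' = j then a / c else 0 with hb
        have hbc : dotProduct b ((M i).transpose.mulVec u) = a := by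
          rw [hb]
          simp only [dotProduct]
          rw [Finset.sum_eq_single j]
          · rw [if_pos rfl, div_mul_cancel₀]
            exact hj
          · intro j' _ hj'
            rw [if_neg hj', zero_mul]
          · intro hj'; exact absurd (Finset.mem_univ j) hj'
        have hmem : (M i).mulVec b ∈ V i := by
          rw [hV i]; exact ⟨b, rfl⟩
        refine AddChar.ne_one_iff.2 ⟨⟨(M i).mulVec b, hmem⟩, ?_⟩
        show π (f _) ≠ 1
        have hf : f ⟨(M i).mulVec b, hmem⟩ = a := by
          show dotProduct ((M i).mulVec b) u = a
          rw [hdot i b, hbc]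
        rw [hf]; exact ha
      have hz := AddChar.sum_eq_zero_of_ne_one hne
      exact hz
  -- swap the sums
  have hswap : (∑ v : Fin k → K,
        (∑ i : Fin m, (Nat.card (V i) : ℂ)⁻¹ *
          Set.indicator (V i : Set (Fin k → K)) 1 v) * π (dotProduct v u))
      = ∑ i : Fin m, (Nat.card (V i) : ℂ)⁻¹ *
          ∑ v : Fin k → K, (if v ∈ V i then (1:ℂ) else 0) * π (dotProduct v u) := by
    simp only [Finset.sum_mul]
    rw [Finset.sum_comm]
    refine Finset.sum_congr rfl fun i _ => ?_
    rw [Finset.mul_sum]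
    refine Finset.sum_congr rfl fun v _ => ?_
    rw [Set.indicator_apply]
    by_cases hv : v ∈ (V i : Set (Fin k → K))
    · simp only [if_pos hv, Pi.one_apply]
      have : v ∈ V i := hv
      rw [if_pos this]; ring
    · have : ¬ v ∈ V i := hv
      rw [if_neg hv, if_neg this]; ring
  rw [hswap]
  have hcard : ∀ i : Fin m, (Nat.card (V i) : ℂ) ≠ 0 := by
    intro i
    have : 0 < Nat.card (V i) := Nat.card_pos
    exact_mod_cast this.ne'
  have hterm : ∀ i : Fin m, (Nat.card (V i) : ℂ)⁻¹ *
      (∑ v : Fin k → K, (if v ∈ V i then (1:ℂ) else 0) * π (dotProduct v u))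
      = if (M i).transpose.mulVec u = 0 then (1:ℂ) else 0 := by
    intro i
    rw [key i]
    by_cases h : (M i).transpose.mulVec u = 0
    · rw [if_pos h, if_pos h, inv_mul_cancel₀ (hcard i)]
    · rw [if_neg h, if_neg h, mul_zero]
  rw [Finset.sum_congr rfl fun i _ => hterm i]
  rw [Finset.sum_boole]
  have hsplit := Finset.card_filter_add_card_filter_not
    (s := (Finset.univ : Finset (Fin m))) (p := fun i => (M i).transpose.mulVec u = 0)
  simp only [Finset.card_univ, Fintype.card_fin] at hsplit
  have hc : ((Finset.univ.filter fun i : Fin m => (M i).transpose.mulVec u = 0).card : ℂ)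
      + ((Finset.univ.filter fun i : Fin m => ¬ (M i).transpose.mulVec u = 0).card : ℂ) = m := by
    exact_mod_cast congrArg (Nat.cast : ℕ → ℂ) hsplit
  rw [eq_sub_iff_add_eq, add_comm]
  exact hc
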